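/- If put satisfies ViewDetermination and SourceStability, then the witness v in SourceStability is unique: for every s : S, there exists exactly one v : V with put s v = s, and the function get sending s to this unique v satisfies get (put s v) = v and put s (get s) = s; that is, this get is the unique get forming a well-behaved pair with put. -/
import Mathlib


theorem unique_witness_get {S V : Type*} (put : S → V → S)
    (hvd : ∀ s s' v v', put s v = put s' v' → v = v')
    (hss : ∀ s : S, ∃ v : V, put s v = s) :
    (∀ s : S, ∃! v : V, put s v = s) ∧
    ∃ get : S → V, (∀ s, put s (get s) = s) ∧ (∀ s v, get (put s v) = v) ∧
      ∀ get' : S → V, (∀ s, put s (get' s) = s) → (∀ s v, get' (put s v) = v) →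
        get' = get := by
  have huniq : ∀ s : S, ∃! v : V, put s v = s := by
    intro s
    obtain ⟨v, hv⟩ := hss s
    exact ⟨v, hv, fun w hw => hvd s s w v (hw.trans hv.symm)⟩
  refine ⟨huniq, fun s => (huniq s).choose, fun s => (huniq s).choose_spec.1, ?_, ?_⟩
  · intro s v
    exact hvd (put s v) s _ v ((huniq (put s v)).choose_spec.1)
  · intro get' h1 h2
    funext s
    exact hvd s s (get' s) _ ((h1 s).trans ((huniq s).choose_spec.1).symm)
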